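/- For any polymatroid f on ground set M, the double dual (f⊥)⊥ equals the full tightening f↓ of f, obtained by stripping the private info f(M)−f(M∖{i}) of every element i from each set containing it; in particular (f⊥)(⊥)(⊥) = f⊥. -/
import Mathlib


/-- The double dual of a polymatroid equals its full tightening; in particular the
triple dual equals the dual. -/
theorem double_dual_eq_tightening {α : Type*} [DecidableEq α] (M : Finset α) (f : Finset α → ℝ)
    (hempty : f ∅ = 0)
    (hnonneg : ∀ A, A ⊆ M → 0 ≤ f A)
    (hmono : ∀ A B : Finset α, A ⊆ B → B ⊆ M → f A ≤ f B)
    (hsub : ∀ A B : Finset α, A ⊆ M → B ⊆ M → f (A ∪ B) + f (A ∩ B) ≤ f A + f B)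
    (fd fdd fddd fdown : Finset α → ℝ)
    (hfd : ∀ A : Finset α, fd A = f (M \ A) + (∑ j ∈ A, f {j}) - f M)
    (hfdd : ∀ A : Finset α, fdd A = fd (M \ A) + (∑ j ∈ A, fd {j}) - fd M)
    (hfddd : ∀ A : Finset α, fddd A = fdd (M \ A) + (∑ j ∈ A, fdd {j}) - fdd M)
    (hfdown : ∀ A : Finset α, fdown A = f A - ∑ i ∈ A, (f M - f (M \ {i}))) :
    (∀ A, A ⊆ M → fdd A = fdown A) ∧ (∀ A, A ⊆ M → fddd A = fd A) := by
  have key : ∀ A, A ⊆ M → fdd A = fdown A := by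
    intro A hA
    have hMA : M \ (M \ A) = A := by
      rw [Finset.sdiff_sdiff_self_left, Finset.inter_eq_right.mpr hA]
    have hsplit : (∑ j ∈ M \ A, f {j}) + (∑ j ∈ A, f {j}) = ∑ j ∈ M, f {j} :=
      Finset.sum_sdiff hA
    rw [hfdd, hfdown, hfd, hfd, hMA, Finset.sdiff_self, hempty]
    simp only [hfd, Finset.sum_singleton, Finset.sum_sub_distrib, Finset.sum_add_distrib]
    rw [← hsplit]
    ring
  refine ⟨key, fun A hA => ?_⟩
  have hMA : M \ (M \ A) = A := by
    rw [Finset.sdiff_sdiff_self_left, Finset.inter_eq_right.mpr hA]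
  have hsum : ∑ j ∈ A, fdd {j} = ∑ j ∈ A, fdown {j} := by
    refine Finset.sum_congr rfl fun j hj => key {j} ?_
    simpa using hA hj
  rw [hfddd, key (M \ A) (Finset.sdiff_subset), key M (le_refl M), hsum, hfdown, hfdown, hfd]
  have hs1 : (∑ _i ∈ M \ A, f M) + (∑ _i ∈ A, f M) = ∑ _i ∈ M, f M := Finset.sum_sdiff hA
  have hs2 : (∑ i ∈ M \ A, f (M \ {i})) + (∑ i ∈ A, f (M \ {i})) = ∑ i ∈ M, f (M \ {i}) :=
    Finset.sum_sdiff hA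
  simp only [hfdown, Finset.sum_singleton, Finset.sum_sub_distrib]
  rw [← hs1, ← hs2]
  ring
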